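/- Let S be a monoid and let d : S → ℕ satisfy d(1) = 0 and d(s·t) = d(s) + d(t) for all s, t ∈ S. Suppose S is the disjoint union of a finite set Y and a free sandwich a⟨w⟩b (so the map n ↦ a * w^n * b is injective and its range is disjoint from Y), and suppose d(w) > 0. Then there exists a finite set F ⊆ S such that S = {w^n : n ∈ ℕ} ∪ F; that is, S is the union of the monogenic submonoid generated by w and a finite set. -/
import Mathlib


/-- The sandwich `a⟨w⟩b = {a * w^n * b : n ∈ ℕ}` in a monoid. -/
def sandwich {S : Type*} [Monoid S] (a w b : S) : Set S :=
  Set.range fun n : ℕ => a * w ^ n * b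

theorem gamma_one_implies_monogenic_up_to_finite
    {S : Type*} [Monoid S] (d : S → ℕ)
    (hd1 : d 1 = 0) (hdmul : ∀ s t : S, d (s * t) = d s + d t)
    (Y : Set S) (hY : Y.Finite) (a w b : S)
    (hfree : Function.Injective fun n : ℕ => a * w ^ n * b)
    (hdisj : Disjoint Y (sandwich a w b))
    (hcover : (Set.univ : Set S) = Y ∪ sandwich a w b)
    (hdw : 0 < d w) :
    ∃ F : Set S, F.Finite ∧
      (Set.univ : Set S) = Set.range (fun n : ℕ => w ^ n) ∪ F := by
  have hpow : ∀ k : ℕ, d (w ^ k) = k * d w := by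
    intro k
    induction k with
    | zero => simpa using hd1
    | succ k ih => rw [pow_succ, hdmul, ih]; ring
  have hpinj : Function.Injective fun k : ℕ => w ^ k := by
    intro i j h
    have h2 : i * d w = j * d w := by
      rw [← hpow, ← hpow]; exact congrArg d h
    exact Nat.eq_of_mul_eq_mul_right hdw h2
  have hYfin : {k : ℕ | w ^ k ∈ Y}.Finite :=
    Set.Finite.preimage (Set.injOn_of_injective hpinj) hY
  obtain ⟨K0, hK0⟩ := hYfin.bddAbove
  set K := K0 + 1 with hKdef
  have hsand : ∀ k, K ≤ k → ∃ n, a * w ^ n * b = w ^ k := by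
    intro k hk
    have hmem : w ^ k ∈ Y ∪ sandwich a w b := by rw [← hcover]; trivial
    rcases hmem with h | h
    · exact absurd (hK0 h) (by omega)
    · exact h
  have hdeg : ∀ n k : ℕ, a * w ^ n * b = w ^ k → d a + d b + n * d w = k * d w := by
    intro n k h
    have h2 := congrArg d h
    rw [hdmul, hdmul, hpow, hpow] at h2
    linarith
  obtain ⟨n0, hn0⟩ := hsand K le_rfl
  have hd0 := hdeg n0 K hn0
  have hn0K : n0 ≤ K := by
    have h1 : n0 * d w ≤ K * d w := by
      rw [← hd0]; exact Nat.le_add_left _ _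
    exact Nat.le_of_mul_le_mul_right h1 hdw
  refine ⟨Y ∪ (fun n : ℕ => a * w ^ n * b) '' Set.Iio n0,
    hY.union ((Set.finite_Iio n0).image _), ?_⟩
  ext s
  simp only [Set.mem_univ, true_iff]
  have hs : s ∈ Y ∪ sandwich a w b := by rw [← hcover]; trivial
  rcases hs with h | ⟨n, rfl⟩
  · right; left; exact h
  · rcases lt_or_ge n n0 with hn | hn
    · right; right; exact ⟨n, hn, rfl⟩
    · left
      set c := K - n0 with hcdef
      have hcK : n0 + c = K := by omega
      refine ⟨n + c, ?_⟩
      obtain ⟨m, hm⟩ := hsand (n + c) (by omega)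
      have hdm := hdeg m _ hm
      have hmn : m = n := by
        have e1 : (n + c) * d w = n * d w + c * d w := add_mul _ _ _
        have e2 : K * d w = n0 * d w + c * d w := by rw [← hcK]; exact add_mul _ _ _
        have h1 : m * d w = n * d w := by linarith
        exact Nat.eq_of_mul_eq_mul_right hdw h1
      rw [hmn] at hm
      exact hm.symm
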